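/- Assume f satisfies MM, k ≤ −b₂, μ(W) = 0, and μ([x₁,b₁] × [a₂,x₂]) ≥ 0 for every (x₁,x₂) ∈ W. Then ∫_W u dμ ≤ 0 for every continuous convex function u : X → ℝ that is nonincreasing in the first coordinate and nondecreasing in the second coordinate. -/

import Mathlib

open MeasureTheory Set

noncomputable section

/-- The type rectangle `X = [a₁,b₁] × [a₂,b₂] ⊆ ℝ²`. -/
def rect (a₁ b₁ a₂ b₂ : ℝ) : Set (ℝ × ℝ) := Icc a₁ b₁ ×ˢ Icc a₂ b₂

/-- First partial derivative `∂₁f(x)`. -/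
def d1 (f : ℝ × ℝ → ℝ) (x : ℝ × ℝ) : ℝ := deriv (fun s => f (s, x.2)) x.1

/-- Second partial derivative `∂₂f(x)`. -/
def d2 (f : ℝ × ℝ → ℝ) (x : ℝ × ℝ) : ℝ := deriv (fun s => f (x.1, s)) x.2

/-- The interior density of the transformed measure `μ`:
`x₁·∂₁f(x) + (x₂+k)·∂₂f(x) + 3·f(x)`. -/
def dens (k : ℝ) (f : ℝ × ℝ → ℝ) (x : ℝ × ℝ) : ℝ :=
  x.1 * d1 f x + (x.2 + k) * d2 f x + 3 * f x

/-- The integral `∫ g dμ` of a function `g` against the transformed measure `μ` on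
`X = [a₁,b₁] × [a₂,b₂]` with constant third-party payment `k`: a unit atom at the
lower-left corner `x̲ = (a₁,a₂)`, signed line densities on the four edges of `X`, and
(negated) interior density `dens k f` against two-dimensional Lebesgue measure. -/
def muInt (a₁ b₁ a₂ b₂ k : ℝ) (f g : ℝ × ℝ → ℝ) : ℝ :=
  g (a₁, a₂)
    - (a₂ + k) * ∫ s in a₁..b₁, g (s, a₂) * f (s, a₂)
    + (b₂ + k) * ∫ s in a₁..b₁, g (s, b₂) * f (s, b₂)
    + b₁ * ∫ s in a₂..b₂, g (b₁, s) * f (b₁, s)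
    - a₁ * ∫ s in a₂..b₂, g (a₁, s) * f (a₁, s)
    - ∫ x in rect a₁ b₁ a₂ b₂, g x * dens k f x

/-- `μ(A)` for a set `A ⊆ X`, obtained by integrating the indicator of `A` against `μ`. -/
def muSet (a₁ b₁ a₂ b₂ k : ℝ) (f : ℝ × ℝ → ℝ) (A : Set (ℝ × ℝ)) : ℝ :=
  muInt a₁ b₁ a₂ b₂ k f (A.indicator 1)

/-- `u` is nondecreasing in the first coordinate on `X`. -/
def IncAlong1 (X : Set (ℝ × ℝ)) (u : ℝ × ℝ → ℝ) : Prop :=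
  ∀ s s' t : ℝ, (s, t) ∈ X → (s', t) ∈ X → s ≤ s' → u (s, t) ≤ u (s', t)

/-- `u` is nondecreasing in the second coordinate on `X`. -/
def IncAlong2 (X : Set (ℝ × ℝ)) (u : ℝ × ℝ → ℝ) : Prop :=
  ∀ s t t' : ℝ, (s, t) ∈ X → (s, t') ∈ X → t ≤ t' → u (s, t) ≤ u (s, t')

/-- `u` is nonincreasing in the first coordinate on `X`. -/
def DecAlong1 (X : Set (ℝ × ℝ)) (u : ℝ × ℝ → ℝ) : Prop :=
  ∀ s s' t : ℝ, (s, t) ∈ X → (s', t) ∈ X → s ≤ s' → u (s', t) ≤ u (s, t)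

/-- `u` is nonincreasing in the second coordinate on `X`. -/
def DecAlong2 (X : Set (ℝ × ℝ)) (u : ℝ × ℝ → ℝ) : Prop :=
  ∀ s t t' : ℝ, (s, t) ∈ X → (s, t') ∈ X → t ≤ t' → u (s, t') ≤ u (s, t)

/-- The feasible class `𝒰`: continuous, convex, nondecreasing in each coordinate,
and 1-Lipschitz with respect to the `ℓ¹` norm, on `X`. -/
def FeasibleU (X : Set (ℝ × ℝ)) (u : ℝ × ℝ → ℝ) : Prop :=
  ContinuousOn u X ∧ ConvexOn ℝ X u ∧ IncAlong1 X u ∧ IncAlong2 X u ∧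
    ∀ x ∈ X, ∀ y ∈ X, |u x - u y| ≤ |x.1 - y.1| + |x.2 - y.2|

end

noncomputable section
/-- Region of types buying nothing under the Good-Only Posted Price at `p`. -/
def Zgo (a₁ b₁ a₂ b₂ p : ℝ) : Set (ℝ × ℝ) := {x ∈ rect a₁ b₁ a₂ b₂ | x.1 ≤ p}

/-- Region of types buying the good under the Good-Only Posted Price at `p`. -/
def Wgo (a₁ b₁ a₂ b₂ p : ℝ) : Set (ℝ × ℝ) := {x ∈ rect a₁ b₁ a₂ b₂ | p < x.1}

/-- The marginal cumulative measure `M(s) = μ([a₁,s] × [a₂,b₂])`. -/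
def Mgo (a₁ b₁ a₂ b₂ k : ℝ) (f : ℝ × ℝ → ℝ) (s : ℝ) : ℝ :=
  muSet a₁ b₁ a₂ b₂ k f (Icc a₁ s ×ˢ Icc a₂ b₂)

end


noncomputable section StmtNineAux

/-- All five integrands appearing in `muInt` are integrable for `g`. -/
def NiceFun (a₁ b₁ a₂ b₂ k : ℝ) (f g : ℝ × ℝ → ℝ) : Prop :=
  IntervalIntegrable (fun s => g (s, a₂) * f (s, a₂)) volume a₁ b₁ ∧
  IntervalIntegrable (fun s => g (s, b₂) * f (s, b₂)) volume a₁ b₁ ∧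
  IntervalIntegrable (fun s => g (b₁, s) * f (b₁, s)) volume a₂ b₂ ∧
  IntervalIntegrable (fun s => g (a₁, s) * f (a₁, s)) volume a₂ b₂ ∧
  IntegrableOn (fun x => g x * dens k f x) (rect a₁ b₁ a₂ b₂)

/-- Flat (unnested) version of the functional `muInt`. -/
def muFlat (a₁ b₁ a₂ b₂ k : ℝ) (f g : ℝ × ℝ → ℝ) : ℝ :=
  g (a₁, a₂)
    + (-(a₂ + k)) * (∫ s in a₁..b₁, g (s, a₂) * f (s, a₂))
    + (-((a₂ + k) * (b₁ - a₁) * (b₂ + k))) * (∫ s in a₁..b₁, g (s, b₂) * f (s, b₂))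
    + (-((a₂ + k) * (b₁ - a₁) * (b₂ + k) * (b₁ - a₁) * b₁)) * (∫ s in a₂..b₂, g (b₁, s) * f (b₁, s))
    + ((a₂ + k) * (b₁ - a₁) * (b₂ + k) * (b₁ - a₁) * b₁ * (b₂ - a₂) * a₁) * (∫ s in a₂..b₂, g (a₁, s) * f (a₁, s))
    + (-((a₂ + k) * (b₁ - a₁) * (b₂ + k) * (b₁ - a₁) * b₁ * (b₂ - a₂) * a₁ * (b₂ - a₂))) *
        (∫ x in rect a₁ b₁ a₂ b₂, g x * dens k f x)

theorem muInt_eq_flat {a₁ b₁ a₂ b₂ k : ℝ} {f g : ℝ × ℝ → ℝ}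
    (h : NiceFun a₁ b₁ a₂ b₂ k f g) :
    muInt a₁ b₁ a₂ b₂ k f g = muFlat a₁ b₁ a₂ b₂ k f g := by
  have i4 : (∫ s in a₂..b₂, (g (a₁, s) * f (a₁, s) - ∫ x in rect a₁ b₁ a₂ b₂, g x * dens k f x))
      = ((∫ s in a₂..b₂, g (a₁, s) * f (a₁, s)) - (b₂ - a₂) * ∫ x in rect a₁ b₁ a₂ b₂, g x * dens k f x) := by
    rw [intervalIntegral.integral_sub h.2.2.2.1 intervalIntegrable_const,
      intervalIntegral.integral_const, smul_eq_mul]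
  have i3 : (∫ s in a₂..b₂, (g (b₁, s) * f (b₁, s) - a₁ * ((∫ s in a₂..b₂, g (a₁, s) * f (a₁, s)) - (b₂ - a₂) * ∫ x in rect a₁ b₁ a₂ b₂, g x * dens k f x)))
      = ((∫ s in a₂..b₂, g (b₁, s) * f (b₁, s)) - (b₂ - a₂) * (a₁ * ((∫ s in a₂..b₂, g (a₁, s) * f (a₁, s)) - (b₂ - a₂) * ∫ x in rect a₁ b₁ a₂ b₂, g x * dens k f x))) := by
    rw [intervalIntegral.integral_sub h.2.2.1 intervalIntegrable_const,
      intervalIntegral.integral_const, smul_eq_mul]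
  have i2 : (∫ s in a₁..b₁, (g (s, b₂) * f (s, b₂) + b₁ * ((∫ s in a₂..b₂, g (b₁, s) * f (b₁, s)) - (b₂ - a₂) * (a₁ * ((∫ s in a₂..b₂, g (a₁, s) * f (a₁, s)) - (b₂ - a₂) * ∫ x in rect a₁ b₁ a₂ b₂, g x * dens k f x)))))
      = ((∫ s in a₁..b₁, g (s, b₂) * f (s, b₂)) + (b₁ - a₁) * (b₁ * ((∫ s in a₂..b₂, g (b₁, s) * f (b₁, s)) - (b₂ - a₂) * (a₁ * ((∫ s in a₂..b₂, g (a₁, s) * f (a₁, s)) - (b₂ - a₂) * ∫ x in rect a₁ b₁ a₂ b₂, g x * dens k f x))))) := by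
    rw [intervalIntegral.integral_add h.2.1 intervalIntegrable_const,
      intervalIntegral.integral_const, smul_eq_mul]
  have i1 : (∫ s in a₁..b₁, (g (s, a₂) * f (s, a₂) + (b₂ + k) * ((∫ s in a₁..b₁, g (s, b₂) * f (s, b₂)) + (b₁ - a₁) * (b₁ * ((∫ s in a₂..b₂, g (b₁, s) * f (b₁, s)) - (b₂ - a₂) * (a₁ * ((∫ s in a₂..b₂, g (a₁, s) * f (a₁, s)) - (b₂ - a₂) * ∫ x in rect a₁ b₁ a₂ b₂, g x * dens k f x)))))))
      = ((∫ s in a₁..b₁, g (s, a₂) * f (s, a₂)) + (b₁ - a₁) * ((b₂ + k) * ((∫ s in a₁..b₁, g (s, b₂) * f (s, b₂)) + (b₁ - a₁) * (b₁ * ((∫ s in a₂..b₂, g (b₁, s) * f (b₁, s)) - (b₂ - a₂) * (a₁ * ((∫ s in a₂..b₂, g (a₁, s) * f (a₁, s)) - (b₂ - a₂) * ∫ x in rect a₁ b₁ a₂ b₂, g x * dens k f x))))))) := by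
    rw [intervalIntegral.integral_add h.1 intervalIntegrable_const,
      intervalIntegral.integral_const, smul_eq_mul]
  unfold muInt muFlat
  simp only [i4, i3, i2, i1]
  ring

theorem NiceFun.add' {a₁ b₁ a₂ b₂ k : ℝ} {f g₁ g₂ : ℝ × ℝ → ℝ}
    (h₁ : NiceFun a₁ b₁ a₂ b₂ k f g₁) (h₂ : NiceFun a₁ b₁ a₂ b₂ k f g₂) :
    NiceFun a₁ b₁ a₂ b₂ k f (g₁ + g₂) := by
  refine ⟨?_, ?_, ?_, ?_, ?_⟩
  · exact (show (fun s => (g₁ + g₂) (s, a₂) * f (s, a₂))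
      = fun s => g₁ (s, a₂) * f (s, a₂) + g₂ (s, a₂) * f (s, a₂) by
        funext s; simp [add_mul]) ▸ h₁.1.add h₂.1
  · exact (show (fun s => (g₁ + g₂) (s, b₂) * f (s, b₂))
      = fun s => g₁ (s, b₂) * f (s, b₂) + g₂ (s, b₂) * f (s, b₂) by
        funext s; simp [add_mul]) ▸ h₁.2.1.add h₂.2.1
  · exact (show (fun s => (g₁ + g₂) (b₁, s) * f (b₁, s))
      = fun s => g₁ (b₁, s) * f (b₁, s) + g₂ (b₁, s) * f (b₁, s) by
        funext s; simp [add_mul]) ▸ h₁.2.2.1.add h₂.2.2.1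
  · exact (show (fun s => (g₁ + g₂) (a₁, s) * f (a₁, s))
      = fun s => g₁ (a₁, s) * f (a₁, s) + g₂ (a₁, s) * f (a₁, s) by
        funext s; simp [add_mul]) ▸ h₁.2.2.2.1.add h₂.2.2.2.1
  · exact (show (fun x => (g₁ + g₂) x * dens k f x)
      = fun x => g₁ x * dens k f x + g₂ x * dens k f x by
        funext x; simp [add_mul]) ▸ h₁.2.2.2.2.add h₂.2.2.2.2

theorem NiceFun.smul' {a₁ b₁ a₂ b₂ k : ℝ} {f g : ℝ × ℝ → ℝ} (c : ℝ)
    (h : NiceFun a₁ b₁ a₂ b₂ k f g) :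
    NiceFun a₁ b₁ a₂ b₂ k f (c • g) := by
  refine ⟨?_, ?_, ?_, ?_, ?_⟩
  · exact (show (fun s => (c • g) (s, a₂) * f (s, a₂))
      = fun s => c * (g (s, a₂) * f (s, a₂)) by
        funext s; simp [smul_eq_mul, mul_assoc]) ▸ h.1.const_mul c
  · exact (show (fun s => (c • g) (s, b₂) * f (s, b₂))
      = fun s => c * (g (s, b₂) * f (s, b₂)) by
        funext s; simp [smul_eq_mul, mul_assoc]) ▸ h.2.1.const_mul c
  · exact (show (fun s => (c • g) (b₁, s) * f (b₁, s))
      = fun s => c * (g (b₁, s) * f (b₁, s)) by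
        funext s; simp [smul_eq_mul, mul_assoc]) ▸ h.2.2.1.const_mul c
  · exact (show (fun s => (c • g) (a₁, s) * f (a₁, s))
      = fun s => c * (g (a₁, s) * f (a₁, s)) by
        funext s; simp [smul_eq_mul, mul_assoc]) ▸ h.2.2.2.1.const_mul c
  · exact (show (fun x => (c • g) x * dens k f x)
      = fun x => c * (g x * dens k f x) by
        funext x; simp [smul_eq_mul, mul_assoc]) ▸ h.2.2.2.2.const_mul c

theorem nicefun_zero {a₁ b₁ a₂ b₂ k : ℝ} {f : ℝ × ℝ → ℝ} :
    NiceFun a₁ b₁ a₂ b₂ k f 0 := by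
  refine ⟨?_, ?_, ?_, ?_, ?_⟩
  · have : (fun s : ℝ => (0 : ℝ × ℝ → ℝ) (s, a₂) * f (s, a₂)) = fun _ : ℝ => (0:ℝ) := by
      funext s; simp
    rw [this]; exact intervalIntegrable_const
  · have : (fun s : ℝ => (0 : ℝ × ℝ → ℝ) (s, b₂) * f (s, b₂)) = fun _ : ℝ => (0:ℝ) := by
      funext s; simp
    rw [this]; exact intervalIntegrable_const
  · have : (fun s : ℝ => (0 : ℝ × ℝ → ℝ) (b₁, s) * f (b₁, s)) = fun _ : ℝ => (0:ℝ) := by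
      funext s; simp
    rw [this]; exact intervalIntegrable_const
  · have : (fun s : ℝ => (0 : ℝ × ℝ → ℝ) (a₁, s) * f (a₁, s)) = fun _ : ℝ => (0:ℝ) := by
      funext s; simp
    rw [this]; exact intervalIntegrable_const
  · have : (fun x : ℝ × ℝ => (0 : ℝ × ℝ → ℝ) x * dens k f x) = fun _ : ℝ × ℝ => (0:ℝ) := by
      funext x; simp
    rw [this]
    exact integrableOn_zero

theorem muFlat_zero (a₁ b₁ a₂ b₂ k : ℝ) (f : ℝ × ℝ → ℝ) :
    muFlat a₁ b₁ a₂ b₂ k f 0 = 0 := by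
  simp [muFlat]

theorem muFlat_add' {a₁ b₁ a₂ b₂ k : ℝ} {f g₁ g₂ : ℝ × ℝ → ℝ}
    (h₁ : NiceFun a₁ b₁ a₂ b₂ k f g₁) (h₂ : NiceFun a₁ b₁ a₂ b₂ k f g₂) :
    muFlat a₁ b₁ a₂ b₂ k f (g₁ + g₂)
      = muFlat a₁ b₁ a₂ b₂ k f g₁ + muFlat a₁ b₁ a₂ b₂ k f g₂ := by
  unfold muFlat
  have e1 := intervalIntegral.integral_add h₁.1 h₂.1
  have e2 := intervalIntegral.integral_add h₁.2.1 h₂.2.1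
  have e3 := intervalIntegral.integral_add h₁.2.2.1 h₂.2.2.1
  have e4 := intervalIntegral.integral_add h₁.2.2.2.1 h₂.2.2.2.1
  have e5 := MeasureTheory.integral_add h₁.2.2.2.2 h₂.2.2.2.2
  simp only [Pi.add_apply, add_mul, e1, e2, e3, e4, e5]
  ring

theorem muFlat_smul' (a₁ b₁ a₂ b₂ k : ℝ) (f g : ℝ × ℝ → ℝ) (c : ℝ) :
    muFlat a₁ b₁ a₂ b₂ k f (c • g) = c * muFlat a₁ b₁ a₂ b₂ k f g := by
  unfold muFlat
  have e1 := intervalIntegral.integral_const_mul (μ := volume) c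
    (fun s => g (s, a₂) * f (s, a₂)) (a := a₁) (b := b₁)
  have e2 := intervalIntegral.integral_const_mul (μ := volume) c
    (fun s => g (s, b₂) * f (s, b₂)) (a := a₁) (b := b₁)
  have e3 := intervalIntegral.integral_const_mul (μ := volume) c
    (fun s => g (b₁, s) * f (b₁, s)) (a := a₂) (b := b₂)
  have e4 := intervalIntegral.integral_const_mul (μ := volume) c
    (fun s => g (a₁, s) * f (a₁, s)) (a := a₂) (b := b₂)
  have e5 := MeasureTheory.integral_const_mul (μ := volume.restrict (rect a₁ b₁ a₂ b₂)) c
    (fun x => g x * dens k f x)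
  simp only [Pi.smul_apply, smul_eq_mul, mul_assoc] at *
  simp only [e1, e2, e3, e4, e5]
  ring

theorem nicefun_sum {a₁ b₁ a₂ b₂ k : ℝ} {f : ℝ × ℝ → ℝ} {ι : Type*} (s : Finset ι)
    (F : ι → ℝ × ℝ → ℝ) (h : ∀ i ∈ s, NiceFun a₁ b₁ a₂ b₂ k f (F i)) :
    NiceFun a₁ b₁ a₂ b₂ k f (∑ i ∈ s, F i) := by
  induction s using Finset.cons_induction_on with
  | empty => simpa using nicefun_zero
  | cons _ _ ha ih =>
      rw [Finset.sum_cons]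
      exact NiceFun.add' (h _ (Finset.mem_cons_self _ _))
        (ih fun i hi => h i (Finset.mem_cons_of_mem hi))

theorem muFlat_sum {a₁ b₁ a₂ b₂ k : ℝ} {f : ℝ × ℝ → ℝ} {ι : Type*} (s : Finset ι)
    (F : ι → ℝ × ℝ → ℝ) (h : ∀ i ∈ s, NiceFun a₁ b₁ a₂ b₂ k f (F i)) :
    muFlat a₁ b₁ a₂ b₂ k f (∑ i ∈ s, F i) = ∑ i ∈ s, muFlat a₁ b₁ a₂ b₂ k f (F i) := by
  induction s using Finset.cons_induction_on with
  | empty => simpa using muFlat_zero a₁ b₁ a₂ b₂ k f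
  | cons _ _ ha ih =>
      rw [Finset.sum_cons, Finset.sum_cons,
        muFlat_add' (h _ (Finset.mem_cons_self _ _))
          (nicefun_sum _ _ fun i hi => h i (Finset.mem_cons_of_mem hi)),
        ih fun i hi => h i (Finset.mem_cons_of_mem hi)]

theorem nicefun_indicator {a₁ b₁ a₂ b₂ k : ℝ} {f : ℝ × ℝ → ℝ}
    (h1 : a₁ ≤ b₁) (h2 : a₂ ≤ b₂)
    (hf : ContinuousOn f (rect a₁ b₁ a₂ b₂))
    (hdns : ContinuousOn (dens k f) (rect a₁ b₁ a₂ b₂))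
    {ψ : ℝ × ℝ → ℝ} (hψ : ContinuousOn ψ (rect a₁ b₁ a₂ b₂))
    {A : Set (ℝ × ℝ)} (hA : MeasurableSet A) :
    NiceFun a₁ b₁ a₂ b₂ k f (A.indicator ψ) := by
  have hedge : ∀ y ∈ Icc a₂ b₂,
      IntervalIntegrable (fun s => A.indicator ψ (s, y) * f (s, y)) volume a₁ b₁ := by
    intro y hy
    have hmt : MapsTo (fun s => (s, y)) (Icc a₁ b₁) (rect a₁ b₁ a₂ b₂) :=
      fun s hs => Set.mk_mem_prod hs hy
    have hc : Continuous (fun s : ℝ => (s, y)) := continuous_id.prodMk continuous_const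
    have hF : ContinuousOn (fun s => ψ (s, y) * f (s, y)) (Icc a₁ b₁) :=
      (hψ.comp hc.continuousOn hmt).mul (hf.comp hc.continuousOn hmt)
    have hSm : MeasurableSet ((fun s : ℝ => (s, y)) ⁻¹' A) := hA.preimage hc.measurable
    have heq : (fun s => A.indicator ψ (s, y) * f (s, y))
        = ((fun s : ℝ => (s, y)) ⁻¹' A).indicator (fun s => ψ (s, y) * f (s, y)) := by
      funext s
      by_cases hs : (s, y) ∈ A <;>
        simp [Set.indicator_apply, Set.mem_preimage, hs]
    rw [heq, intervalIntegrable_iff_integrableOn_Ioc_of_le h1]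
    exact ((hF.integrableOn_Icc).mono_set Ioc_subset_Icc_self).indicator hSm
  have hedge2 : ∀ x ∈ Icc a₁ b₁,
      IntervalIntegrable (fun s => A.indicator ψ (x, s) * f (x, s)) volume a₂ b₂ := by
    intro x hx
    have hmt : MapsTo (fun s : ℝ => (x, s)) (Icc a₂ b₂) (rect a₁ b₁ a₂ b₂) :=
      fun s hs => Set.mk_mem_prod hx hs
    have hc : Continuous (fun s : ℝ => (x, s)) := continuous_const.prodMk continuous_id
    have hF : ContinuousOn (fun s => ψ (x, s) * f (x, s)) (Icc a₂ b₂) :=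
      (hψ.comp hc.continuousOn hmt).mul (hf.comp hc.continuousOn hmt)
    have hSm : MeasurableSet ((fun s : ℝ => (x, s)) ⁻¹' A) := hA.preimage hc.measurable
    have heq : (fun s => A.indicator ψ (x, s) * f (x, s))
        = ((fun s : ℝ => (x, s)) ⁻¹' A).indicator (fun s => ψ (x, s) * f (x, s)) := by
      funext s
      by_cases hs : (x, s) ∈ A <;>
        simp [Set.indicator_apply, Set.mem_preimage, hs]
    rw [heq, intervalIntegrable_iff_integrableOn_Ioc_of_le h2]
    exact ((hF.integrableOn_Icc).mono_set Ioc_subset_Icc_self).indicator hSm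
  refine ⟨hedge a₂ ⟨le_rfl, h2⟩, hedge b₂ ⟨h2, le_rfl⟩,
    hedge2 b₁ ⟨h1, le_rfl⟩, hedge2 a₁ ⟨le_rfl, h1⟩, ?_⟩
  have heq : (fun x => A.indicator ψ x * dens k f x)
      = A.indicator (fun x => ψ x * dens k f x) := by
    funext x
    by_cases hx : x ∈ A <;> simp [Set.indicator_apply, hx]
  rw [heq]
  have hXc : IsCompact (rect a₁ b₁ a₂ b₂) := isCompact_Icc.prod isCompact_Icc
  exact ((hψ.mul hdns).integrableOn_compact hXc).indicator hA

theorem ae_ne_point (c : ℝ) : ∀ᵐ s : ℝ, s ≠ c := by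
  have h0 : (volume : Measure ℝ) {c} = 0 := Real.volume_singleton
  have h := MeasureTheory.measure_eq_zero_iff_ae_notMem.mp h0
  filter_upwards [h] with s hs
  simpa using hs

end StmtNineAux


set_option maxHeartbeats 1000000 in
/-- Dominance condition on `W` in the proof of Theorem 1. -/
theorem stmt9
    (a₁ b₁ a₂ b₂ : ℝ) (ha₁ : 0 ≤ a₁) (hab₁ : a₁ < b₁) (hab₂ : a₂ < b₂) (hb₂ : b₂ ≤ 0)
    (U : Set (ℝ × ℝ)) (hU : IsOpen U) (hXU : rect a₁ b₁ a₂ b₂ ⊆ U)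
    (f : ℝ × ℝ → ℝ) (hf : ContDiffOn ℝ 1 f U)
    (hfbd : ∃ C, ∀ x ∈ U, |d1 f x| ≤ C ∧ |d2 f x| ≤ C)
    (hfpos : ∀ x ∈ rect a₁ b₁ a₂ b₂, 0 < f x)
    (hfint : (∫ x in rect a₁ b₁ a₂ b₂, f x) = 1)
    (k : ℝ) (hk : 0 ≤ k)
    (hMM : ∀ x ∈ rect a₁ b₁ a₂ b₂, 0 ≤ dens k f x)
    (p : ℝ) (hp : p ∈ Ioc a₁ b₁)
    (hkb : k ≤ -b₂)
    (hW0 : muSet a₁ b₁ a₂ b₂ k f (Wgo a₁ b₁ a₂ b₂ p) = 0)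
    (horth : ∀ x ∈ Wgo a₁ b₁ a₂ b₂ p,
      0 ≤ muSet a₁ b₁ a₂ b₂ k f (Icc x.1 b₁ ×ˢ Icc a₂ x.2))
    (u : ℝ × ℝ → ℝ)
    (huc : ContinuousOn u (rect a₁ b₁ a₂ b₂)) (huconv : ConvexOn ℝ (rect a₁ b₁ a₂ b₂) u)
    (hu1 : DecAlong1 (rect a₁ b₁ a₂ b₂) u) (hu2 : IncAlong2 (rect a₁ b₁ a₂ b₂) u) :
    muInt a₁ b₁ a₂ b₂ k f ((Wgo a₁ b₁ a₂ b₂ p).indicator u) ≤ 0 := by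
  classical
  have hXm : MeasurableSet (rect a₁ b₁ a₂ b₂) := measurableSet_Icc.prod measurableSet_Icc
  have hXc : IsCompact (rect a₁ b₁ a₂ b₂) := isCompact_Icc.prod isCompact_Icc
  have hfX : ContinuousOn f (rect a₁ b₁ a₂ b₂) := (hf.continuousOn).mono hXU
  -- continuity of the density
  have hdiff : ∀ x ∈ U, DifferentiableAt ℝ f x := fun x hx =>
    ((hf.differentiableOn one_ne_zero) x hx).differentiableAt (hU.mem_nhds hx)
  have hd1 : ∀ x ∈ U, d1 f x = fderiv ℝ f x (1, 0) := by
    intro x hx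
    have h1 : HasDerivAt (fun s : ℝ => (s, x.2)) ((1:ℝ), (0:ℝ)) x.1 :=
      (hasDerivAt_id x.1).prodMk (hasDerivAt_const x.1 x.2)
    have hfd : HasFDerivAt f (fderiv ℝ f x) (x.1, x.2) := by
      rw [Prod.mk.eta]; exact (hdiff x hx).hasFDerivAt
    have h2 : HasDerivAt (fun s : ℝ => f (s, x.2)) (fderiv ℝ f x (1, 0)) x.1 := by
      have := hfd.comp_hasDerivAt x.1 h1
      exact this
    exact h2.deriv
  have hd2 : ∀ x ∈ U, d2 f x = fderiv ℝ f x (0, 1) := by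
    intro x hx
    have h1 : HasDerivAt (fun s : ℝ => (x.1, s)) ((0:ℝ), (1:ℝ)) x.2 :=
      (hasDerivAt_const x.2 x.1).prodMk (hasDerivAt_id x.2)
    have hfd : HasFDerivAt f (fderiv ℝ f x) (x.1, x.2) := by
      rw [Prod.mk.eta]; exact (hdiff x hx).hasFDerivAt
    have h2 : HasDerivAt (fun s : ℝ => f (x.1, s)) (fderiv ℝ f x (0, 1)) x.2 := by
      have := hfd.comp_hasDerivAt x.2 h1
      exact this
    exact h2.deriv
  have hfderivC : ContinuousOn (fun x => fderiv ℝ f x) U :=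
    hf.continuousOn_fderiv_of_isOpen hU le_rfl
  have hd1C : ContinuousOn (d1 f) U :=
    ContinuousOn.congr (hfderivC.clm_apply continuousOn_const) hd1
  have hd2C : ContinuousOn (d2 f) U :=
    ContinuousOn.congr (hfderivC.clm_apply continuousOn_const) hd2
  have hdensU : ContinuousOn (dens k f) U := by
    have : ContinuousOn (fun x : ℝ × ℝ => x.1 * d1 f x + (x.2 + k) * d2 f x + 3 * f x) U :=
      ((continuous_fst.continuousOn.mul hd1C).add
        ((continuous_snd.continuousOn.add continuousOn_const).mul hd2C)).add
        (continuousOn_const.mul hf.continuousOn)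
    exact this
  have hdensX : ContinuousOn (dens k f) (rect a₁ b₁ a₂ b₂) := hdensU.mono hXU
  have NICE : ∀ {ψ : ℝ × ℝ → ℝ}, ContinuousOn ψ (rect a₁ b₁ a₂ b₂) →
      ∀ {A : Set (ℝ × ℝ)}, MeasurableSet A → NiceFun a₁ b₁ a₂ b₂ k f (A.indicator ψ) :=
    fun hψ _ hA => nicefun_indicator hab₁.le hab₂.le hfX hdensX hψ hA
  have honeX : ContinuousOn (1 : ℝ × ℝ → ℝ) (rect a₁ b₁ a₂ b₂) := continuousOn_const
  -- shortcut if p = b₁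
  rcases eq_or_lt_of_le hp.2 with hpb | hpb
  · have hWe : Wgo a₁ b₁ a₂ b₂ p = ∅ := by
      ext x
      simp only [Wgo, Set.mem_setOf_eq, Set.mem_empty_iff_false, iff_false, not_and]
      intro hx
      exact not_lt.mpr (hpb ▸ hx.1.2)
    rw [hWe, show ((∅ : Set (ℝ × ℝ)).indicator u) = (0 : ℝ × ℝ → ℝ) from by
      funext x; simp, muInt_eq_flat nicefun_zero, muFlat_zero]
  -- main case : p < b₁
  have hWm : MeasurableSet (Wgo a₁ b₁ a₂ b₂ p) := by
    have : Wgo a₁ b₁ a₂ b₂ p = rect a₁ b₁ a₂ b₂ ∩ (Prod.fst ⁻¹' Ioi p) := rfl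
    rw [this]
    exact hXm.inter (measurable_fst measurableSet_Ioi)
  have hWX : Wgo a₁ b₁ a₂ b₂ p ⊆ rect a₁ b₁ a₂ b₂ := fun x hx => hx.1
  -- bounds
  obtain ⟨Cf, hCf⟩ := hXc.exists_bound_of_continuousOn hfX
  obtain ⟨Cd, hCd⟩ := hXc.exists_bound_of_continuousOn hdensX
  obtain ⟨Cu, hCu⟩ := hXc.exists_bound_of_continuousOn huc
  have hcorner : (a₁, a₂) ∈ rect a₁ b₁ a₂ b₂ := ⟨⟨le_rfl, hab₁.le⟩, ⟨le_rfl, hab₂.le⟩⟩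
  have hCf0 : 0 ≤ Cf := le_trans (norm_nonneg _) (hCf _ hcorner)
  have hCd0 : 0 ≤ Cd := le_trans (norm_nonneg _) (hCd _ hcorner)
  have hCu0 : 0 ≤ Cu := le_trans (norm_nonneg _) (hCu _ hcorner)
  -- sign facts
  have ha₂k : a₂ + k < 0 := by linarith
  have hb₂k : b₂ + k ≤ 0 := by linarith
  have hb₁pos : 0 < b₁ := lt_of_le_of_lt ha₁ hab₁
  -- the function g
  have hpb₂X : (p, b₂) ∈ rect a₁ b₁ a₂ b₂ := ⟨⟨hp.1.le, hp.2⟩, ⟨hab₂.le, le_rfl⟩⟩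
  set c : ℝ := u (p, b₂) with hcdef
  set g : ℝ × ℝ → ℝ := fun x => c - u x with hgdef
  have hgc : ContinuousOn g (rect a₁ b₁ a₂ b₂) := continuousOn_const.sub huc
  have hg0 : ∀ x ∈ Wgo a₁ b₁ a₂ b₂ p, 0 ≤ g x := by
    intro x hx
    have hx1 : u (x.1, x.2) ≤ u (p, x.2) :=
      hu1 p x.1 x.2 ⟨⟨hp.1.le, hp.2⟩, hx.1.2⟩ (Prod.mk.eta.symm ▸ hx.1) hx.2.le
    have hx2 : u (p, x.2) ≤ u (p, b₂) :=
      hu2 p x.2 b₂ ⟨⟨hp.1.le, hp.2⟩, hx.1.2⟩ hpb₂X hx.1.2.2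
    have hxe : u (x.1, x.2) = u x := congrArg u Prod.mk.eta
    simp only [hgdef]
    linarith [hxe ▸ hx1]
  have hgbd : ∀ x ∈ rect a₁ b₁ a₂ b₂, g x ≤ 2 * Cu := by
    intro x hx
    have h1 : |u x| ≤ Cu := hCu x hx
    have h2 : |c| ≤ Cu := hCu _ hpb₂X
    have := abs_le.mp h1
    have := abs_le.mp h2
    simp only [hgdef]
    linarith [(abs_le.mp h1).1, (abs_le.mp h2).2]
  -- the sets K t
  set Kf : ℝ → Set (ℝ × ℝ) := fun t => {x | x ∈ Wgo a₁ b₁ a₂ b₂ p ∧ t < g x} with hKfdef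
  have hKfW : ∀ t, Kf t ⊆ Wgo a₁ b₁ a₂ b₂ p := fun t x hx => hx.1
  have hKfm : ∀ t, MeasurableSet (Kf t) := by
    intro t
    obtain ⟨G, hGo, hGeq⟩ := (continuousOn_iff'.mp hgc) (Ioi t) isOpen_Ioi
    have : Kf t = Wgo a₁ b₁ a₂ b₂ p ∩ G := by
      ext x
      constructor
      · rintro ⟨hxW, hxt⟩
        refine ⟨hxW, ?_⟩
        have : x ∈ g ⁻¹' Ioi t ∩ rect a₁ b₁ a₂ b₂ := ⟨hxt, hxW.1⟩
        rw [hGeq] at this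
        exact this.1
      · rintro ⟨hxW, hxG⟩
        refine ⟨hxW, ?_⟩
        have : x ∈ G ∩ rect a₁ b₁ a₂ b₂ := ⟨hxG, hxW.1⟩
        rw [← hGeq] at this
        exact this.1
    rw [this]
    exact hWm.inter hGo.measurableSet
  have habs_term : ∀ r x M : ℝ, |x| ≤ M → -(|r| * M) ≤ r * x := by
    intro r x M h
    have h1 : |r * x| ≤ |r| * M := by
      rw [abs_mul]
      exact mul_le_mul_of_nonneg_left h (abs_nonneg r)
    have h2 := neg_abs_le (r * x)
    linarith
  have hDIRECT : ∀ s t, p < s → s ≤ b₁ → a₂ ≤ t → t ≤ b₂ →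
      0 ≤ muFlat a₁ b₁ a₂ b₂ k f ((Icc s b₁ ×ˢ Icc a₂ t).indicator 1) := by
    intro s t hls hsb hat htb
    have h := horth (s, t) ⟨⟨⟨le_of_lt (lt_trans hp.1 hls), hsb⟩, ⟨hat, htb⟩⟩, hls⟩
    unfold muSet at h
    rwa [muInt_eq_flat (NICE honeX (measurableSet_Icc.prod measurableSet_Icc))] at h
  have ORT : ∀ s t, p ≤ s → s ≤ b₁ → a₂ ≤ t → t ≤ b₂ →
      0 ≤ muFlat a₁ b₁ a₂ b₂ k f ((Icc s b₁ ×ˢ Icc a₂ t).indicator 1) := by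
    intro s t hps hsb hat htb
    rcases eq_or_lt_of_le hps with hpe | hlt
    swap
    · exact hDIRECT s t hlt hsb hat htb
    subst hpe
    refine le_of_forall_pos_le_add fun ε hε => ?_
    set CC : ℝ := (|a₂ + k| + |(a₂ + k) * (b₁ - a₁) * (b₂ + k)|) * Cf
      + |(a₂ + k) * (b₁ - a₁) * (b₂ + k) * (b₁ - a₁) * b₁ * (b₂ - a₂) * a₁ * (b₂ - a₂)|
          * (Cd * (b₂ - a₂)) + 1 with hCCdef
    have hCC1 : 1 ≤ CC := by
      have h1 : 0 ≤ (|a₂ + k| + |(a₂ + k) * (b₁ - a₁) * (b₂ + k)|) * Cf :=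
        mul_nonneg (by positivity) hCf0
      have h2 : 0 ≤ |(a₂ + k) * (b₁ - a₁) * (b₂ + k) * (b₁ - a₁) * b₁ * (b₂ - a₂) * a₁ * (b₂ - a₂)|
          * (Cd * (b₂ - a₂)) := mul_nonneg (abs_nonneg _) (mul_nonneg hCd0 (by linarith))
      rw [hCCdef]; linarith
    have hCC0 : 0 < CC := by linarith
    set δ : ℝ := min (ε / CC) (b₁ - p) with hδdef
    have hδ0 : 0 < δ := lt_min (div_pos hε hCC0) (by linarith)
    set s' : ℝ := p + δ with hs'def
    have hs'1 : p < s' := by rw [hs'def]; linarith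
    have hs'2 : s' ≤ b₁ := by
      have : δ ≤ b₁ - p := min_le_right _ _
      rw [hs'def]; linarith
    set S : Set (ℝ × ℝ) := Ico p s' ×ˢ Icc a₂ t with hSdef
    have hSm' : MeasurableSet S := measurableSet_Ico.prod measurableSet_Icc
    have hRm' : MeasurableSet (Icc s' b₁ ×ˢ Icc a₂ t) := measurableSet_Icc.prod measurableSet_Icc
    have hsetsplit : Icc p b₁ ×ˢ Icc a₂ t = S ∪ (Icc s' b₁ ×ˢ Icc a₂ t) := by
      rw [hSdef, ← Set.union_prod, Set.Ico_union_Icc_eq_Icc hs'1.le hs'2]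
    have hdisj : Disjoint S (Icc s' b₁ ×ˢ Icc a₂ t) := by
      rw [Set.disjoint_left]
      rintro x ⟨hx1, _⟩ ⟨hy1, _⟩
      exact absurd hy1.1 (not_le.mpr hx1.2)
    have hindsp : (Icc p b₁ ×ˢ Icc a₂ t).indicator (1 : ℝ × ℝ → ℝ)
        = S.indicator 1 + (Icc s' b₁ ×ˢ Icc a₂ t).indicator 1 := by
      rw [hsetsplit]
      exact Set.indicator_union_of_disjoint hdisj 1
    have hflatsplit : muFlat a₁ b₁ a₂ b₂ k f ((Icc p b₁ ×ˢ Icc a₂ t).indicator 1)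
        = muFlat a₁ b₁ a₂ b₂ k f (S.indicator 1)
          + muFlat a₁ b₁ a₂ b₂ k f ((Icc s' b₁ ×ˢ Icc a₂ t).indicator 1) := by
      rw [hindsp]
      exact muFlat_add' (NICE honeX hSm') (NICE honeX hRm')
    have hrest : 0 ≤ muFlat a₁ b₁ a₂ b₂ k f ((Icc s' b₁ ×ˢ Icc a₂ t).indicator 1) :=
      hDIRECT s' t hs'1 hs'2 hat htb
    -- bounds on the strip terms
    have hb1 : S.indicator (1 : ℝ × ℝ → ℝ) (a₁, a₂) = 0 := by
      have hnm : (a₁, a₂) ∉ S := by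
        rw [hSdef]
        exact fun h => absurd h.1.1 (not_le.mpr hp.1)
      rw [Set.indicator_of_notMem hnm]
    have hEDGE : ∀ y, a₂ ≤ y → y ≤ b₂ →
        IntervalIntegrable (fun σ => S.indicator (1 : ℝ × ℝ → ℝ) (σ, y) * f (σ, y)) volume a₁ b₁ →
        |∫ σ in a₁..b₁, S.indicator (1 : ℝ × ℝ → ℝ) (σ, y) * f (σ, y)| ≤ Cf * δ := by
      intro y hy1 hy2 hInt
      have hI1 : IntervalIntegrable
          (fun σ => S.indicator (1 : ℝ × ℝ → ℝ) (σ, y) * f (σ, y)) volume a₁ p := by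
        apply hInt.mono_set
        rw [Set.uIcc_of_le hp.1.le, Set.uIcc_of_le hab₁.le]
        exact Icc_subset_Icc le_rfl hp.2
      have hI2 : IntervalIntegrable
          (fun σ => S.indicator (1 : ℝ × ℝ → ℝ) (σ, y) * f (σ, y)) volume p s' := by
        apply hInt.mono_set
        rw [Set.uIcc_of_le hs'1.le, Set.uIcc_of_le hab₁.le]
        exact Icc_subset_Icc hp.1.le hs'2
      have hI3 : IntervalIntegrable
          (fun σ => S.indicator (1 : ℝ × ℝ → ℝ) (σ, y) * f (σ, y)) volume s' b₁ := by
        apply hInt.mono_set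
        rw [Set.uIcc_of_le hs'2, Set.uIcc_of_le hab₁.le]
        exact Icc_subset_Icc (le_trans hp.1.le hs'1.le) le_rfl
      have e1 := intervalIntegral.integral_add_adjacent_intervals hI1 hI2
      have e2 := intervalIntegral.integral_add_adjacent_intervals (hI1.trans hI2) hI3
      have hz1 : (∫ σ in a₁..p, S.indicator (1 : ℝ × ℝ → ℝ) (σ, y) * f (σ, y)) = 0 := by
        rw [intervalIntegral.integral_congr_ae (g := fun _ => (0:ℝ)) ?_]
        · simp
        · filter_upwards [ae_ne_point p] with σ hσp hσmem
          rw [Set.uIoc_of_le hp.1.le] at hσmem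
          have hσlt : σ < p := lt_of_le_of_ne hσmem.2 hσp
          have hnm : (σ, y) ∉ S := by
            rw [hSdef]
            exact fun hmem => absurd hmem.1.1 (not_le.mpr hσlt)
          rw [Set.indicator_of_notMem hnm, zero_mul]
      have hz3 : (∫ σ in s'..b₁, S.indicator (1 : ℝ × ℝ → ℝ) (σ, y) * f (σ, y)) = 0 := by
        rw [intervalIntegral.integral_congr (g := fun _ => (0:ℝ)) ?_]
        · simp
        · intro σ hσ
          rw [Set.uIcc_of_le hs'2] at hσ
          have hnm : (σ, y) ∉ S := by
            rw [hSdef]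
            exact fun hmem => absurd hmem.1.2 (not_lt.mpr hσ.1)
          show S.indicator (1 : ℝ × ℝ → ℝ) (σ, y) * f (σ, y) = 0
          rw [Set.indicator_of_notMem hnm, zero_mul]
      have hmid : |∫ σ in p..s', S.indicator (1 : ℝ × ℝ → ℝ) (σ, y) * f (σ, y)| ≤ Cf * δ := by
        have hbd : ∀ σ ∈ Set.uIoc p s', ‖S.indicator (1 : ℝ × ℝ → ℝ) (σ, y) * f (σ, y)‖ ≤ Cf := by
          intro σ hσ
          rw [Set.uIoc_of_le hs'1.le] at hσ
          have hmemX : (σ, y) ∈ rect a₁ b₁ a₂ b₂ :=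
            ⟨⟨le_trans hp.1.le hσ.1.le, le_trans hσ.2 hs'2⟩, ⟨hy1, hy2⟩⟩
          have hf' : |f (σ, y)| ≤ Cf := hCf _ hmemX
          have hind : |S.indicator (1 : ℝ × ℝ → ℝ) (σ, y)| ≤ 1 := by
            by_cases h : (σ, y) ∈ S <;> simp [Set.indicator_apply, h]
          rw [Real.norm_eq_abs, abs_mul]
          have := mul_le_mul hind hf' (abs_nonneg _) zero_le_one
          linarith
        have := intervalIntegral.norm_integral_le_of_norm_le_const hbd
        rw [Real.norm_eq_abs] at this
        have hδeq : |s' - p| = δ := by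
          rw [hs'def]; simp [abs_of_pos hδ0]
        rw [hδeq] at this
        exact this
      calc |∫ σ in a₁..b₁, S.indicator (1 : ℝ × ℝ → ℝ) (σ, y) * f (σ, y)|
          = |(∫ σ in a₁..p, S.indicator (1 : ℝ × ℝ → ℝ) (σ, y) * f (σ, y))
              + (∫ σ in p..s', S.indicator (1 : ℝ × ℝ → ℝ) (σ, y) * f (σ, y))
              + (∫ σ in s'..b₁, S.indicator (1 : ℝ × ℝ → ℝ) (σ, y) * f (σ, y))| := by
            rw [e1, e2]
        _ ≤ Cf * δ := by rw [hz1, hz3]; simpa using hmid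
    have hT2 := hEDGE a₂ le_rfl hab₂.le (NICE honeX hSm').1
    have hT3 := hEDGE b₂ hab₂.le le_rfl (NICE honeX hSm').2.1
    have hT4 : (∫ σ in a₂..b₂, S.indicator (1 : ℝ × ℝ → ℝ) (b₁, σ) * f (b₁, σ)) = 0 := by
      have hfun : ∀ σ : ℝ, S.indicator (1 : ℝ × ℝ → ℝ) (b₁, σ) = 0 := by
        intro σ
        have hnm : ((b₁ : ℝ), σ) ∉ S := by
          rw [hSdef]
          exact fun h => absurd h.1.2 (not_lt.mpr hs'2)
        rw [Set.indicator_of_notMem hnm]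
      simp only [hfun, zero_mul, intervalIntegral.integral_zero]
    have hT5 : (∫ σ in a₂..b₂, S.indicator (1 : ℝ × ℝ → ℝ) (a₁, σ) * f (a₁, σ)) = 0 := by
      have hfun : ∀ σ : ℝ, S.indicator (1 : ℝ × ℝ → ℝ) (a₁, σ) = 0 := by
        intro σ
        have hnm : ((a₁ : ℝ), σ) ∉ S := by
          rw [hSdef]
          exact fun h => absurd h.1.1 (not_le.mpr hp.1)
        rw [Set.indicator_of_notMem hnm]
      simp only [hfun, zero_mul, intervalIntegral.integral_zero]
    have hT6 : |∫ x in rect a₁ b₁ a₂ b₂, S.indicator (1 : ℝ × ℝ → ℝ) x * dens k f x|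
        ≤ Cd * (b₂ - a₂) * δ := by
      have heqi : (∫ x in rect a₁ b₁ a₂ b₂, S.indicator (1 : ℝ × ℝ → ℝ) x * dens k f x)
          = ∫ x in rect a₁ b₁ a₂ b₂, S.indicator (dens k f) x := by
        apply MeasureTheory.integral_congr_ae
        filter_upwards with x
        by_cases h : x ∈ S <;> simp [Set.indicator_apply, h]
      rw [heqi, MeasureTheory.integral_indicator hSm',
        MeasureTheory.Measure.restrict_restrict hSm']
      have hsub : S ∩ rect a₁ b₁ a₂ b₂ ⊆ Icc p s' ×ˢ Icc a₂ b₂ := by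
        rintro x ⟨hxS, hxX⟩
        rw [hSdef] at hxS
        exact ⟨⟨hxS.1.1, hxS.1.2.le⟩, hxX.2⟩
      have hvol : volume (S ∩ rect a₁ b₁ a₂ b₂) ≤ ENNReal.ofReal δ * ENNReal.ofReal (b₂ - a₂) := by
        calc volume (S ∩ rect a₁ b₁ a₂ b₂) ≤ volume (Icc p s' ×ˢ Icc a₂ b₂) := measure_mono hsub
          _ = ENNReal.ofReal δ * ENNReal.ofReal (b₂ - a₂) := by
              rw [MeasureTheory.Measure.volume_eq_prod ℝ ℝ, MeasureTheory.Measure.prod_prod,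
                Real.volume_Icc, Real.volume_Icc]
              congr 1
              rw [hs'def]
              ring_nf
        
      have hlt : volume (S ∩ rect a₁ b₁ a₂ b₂) < ⊤ :=
        lt_of_le_of_lt hvol (by finiteness)
      have hbd : ∀ x ∈ S ∩ rect a₁ b₁ a₂ b₂, ‖dens k f x‖ ≤ Cd := fun x hx => hCd x hx.2
      have hmeas : AEStronglyMeasurable (dens k f) (volume.restrict (S ∩ rect a₁ b₁ a₂ b₂)) :=
        (hdensX.mono inter_subset_right).aestronglyMeasurable (hSm'.inter hXm)
      have := MeasureTheory.norm_setIntegral_le_of_norm_le_const hlt hbd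
      rw [Real.norm_eq_abs] at this
      have htoReal : (volume (S ∩ rect a₁ b₁ a₂ b₂)).toReal ≤ δ * (b₂ - a₂) := by
        have h1 : (ENNReal.ofReal δ * ENNReal.ofReal (b₂ - a₂)).toReal = δ * (b₂ - a₂) := by
          rw [ENNReal.toReal_mul, ENNReal.toReal_ofReal hδ0.le,
            ENNReal.toReal_ofReal (by linarith : (0:ℝ) ≤ b₂ - a₂)]
        calc (volume (S ∩ rect a₁ b₁ a₂ b₂)).toReal
            ≤ (ENNReal.ofReal δ * ENNReal.ofReal (b₂ - a₂)).toReal :=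
              ENNReal.toReal_mono (by finiteness) hvol
          _ = δ * (b₂ - a₂) := h1
      calc |∫ x in S ∩ rect a₁ b₁ a₂ b₂, dens k f x| ≤ Cd * (volume (S ∩ rect a₁ b₁ a₂ b₂)).toReal := this
        _ ≤ Cd * (δ * (b₂ - a₂)) := mul_le_mul_of_nonneg_left htoReal hCd0
        _ = Cd * (b₂ - a₂) * δ := by ring
    -- assemble the strip bound
    have hstrip : -(CC * δ) ≤ muFlat a₁ b₁ a₂ b₂ k f (S.indicator 1) := by
      have hterm2 := habs_term (-(a₂ + k)) _ _ hT2
      have hterm3 := habs_term (-((a₂ + k) * (b₁ - a₁) * (b₂ + k))) _ _ hT3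
      have hterm6 := habs_term
        (-((a₂ + k) * (b₁ - a₁) * (b₂ + k) * (b₁ - a₁) * b₁ * (b₂ - a₂) * a₁ * (b₂ - a₂))) _ _ hT6
      unfold muFlat
      rw [hb1, hT4, hT5]
      rw [abs_neg] at hterm2 hterm3 hterm6
      have hgap : |a₂ + k| * (Cf * δ) + |(a₂ + k) * (b₁ - a₁) * (b₂ + k)| * (Cf * δ)
          + |(a₂ + k) * (b₁ - a₁) * (b₂ + k) * (b₁ - a₁) * b₁ * (b₂ - a₂) * a₁ * (b₂ - a₂)|
              * (Cd * (b₂ - a₂) * δ) = CC * δ - δ := by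
        rw [hCCdef]
        ring
      linarith [hterm2, hterm3, hterm6, hδ0.le]
    -- finish
    have hδε2 : CC * δ ≤ ε := by
      have h1 : δ ≤ ε / CC := min_le_left _ _
      calc CC * δ ≤ CC * (ε / CC) := mul_le_mul_of_nonneg_left h1 hCC0.le
        _ = ε := by field_simp
    have := hflatsplit
    linarith [hrest, hstrip]
  have key : ∀ t : ℝ, 0 ≤ muFlat a₁ b₁ a₂ b₂ k f ((Kf t).indicator 1) := by
    intro t
    have hKmem : ∀ x : ℝ × ℝ, x ∈ Kf t ↔ (x ∈ Wgo a₁ b₁ a₂ b₂ p ∧ t < g x) := by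
      intro x; rw [hKfdef]; exact Iff.rfl
    rcases Set.eq_empty_or_nonempty (Kf t) with hKe | ⟨z, hz⟩
    · rw [hKe, show ((∅ : Set (ℝ × ℝ)).indicator (1 : ℝ × ℝ → ℝ)) = (0 : ℝ × ℝ → ℝ) from by
        funext x; simp, muFlat_zero]
    · obtain ⟨hzW, hzt⟩ := (hKmem z).mp hz
      set s₀ : ℝ := sInf (Prod.fst '' Kf t) with hs₀def
      set t₁ : ℝ := sSup (Prod.snd '' Kf t) with ht₁def
      have hne1 : (Prod.fst '' Kf t).Nonempty := ⟨z.1, ⟨z, hz, rfl⟩⟩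
      have hne2 : (Prod.snd '' Kf t).Nonempty := ⟨z.2, ⟨z, hz, rfl⟩⟩
      have hbdd1 : BddBelow (Prod.fst '' Kf t) :=
        ⟨p, by rintro _ ⟨x, hx, rfl⟩; exact ((hKmem x).mp hx).1.2.le⟩
      have hbdd2 : BddAbove (Prod.snd '' Kf t) :=
        ⟨b₂, by rintro _ ⟨x, hx, rfl⟩; exact ((hKmem x).mp hx).1.1.2.2⟩
      have hs₀p : p ≤ s₀ :=
        le_csInf hne1 (by rintro _ ⟨x, hx, rfl⟩; exact ((hKmem x).mp hx).1.2.le)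
      have hs₀b : s₀ ≤ b₁ := le_trans (csInf_le hbdd1 ⟨z, hz, rfl⟩) hzW.1.1.2
      have ht₁a : a₂ ≤ t₁ := le_trans hzW.1.2.1 (le_csSup hbdd2 ⟨z, hz, rfl⟩)
      have ht₁b : t₁ ≤ b₂ :=
        csSup_le hne2 (by rintro _ ⟨x, hx, rfl⟩; exact ((hKmem x).mp hx).1.1.2.2)
      set O : Set (ℝ × ℝ) := Icc s₀ b₁ ×ˢ Icc a₂ t₁ with hOdef
      set D : Set (ℝ × ℝ) := O \ Kf t with hDdef
      have hKO : Kf t ⊆ O := by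
        intro x hx
        obtain ⟨hxW, hxt⟩ := (hKmem x).mp hx
        rw [hOdef]
        exact ⟨⟨csInf_le hbdd1 ⟨x, hx, rfl⟩, hxW.1.1.2⟩, ⟨hxW.1.2.1, le_csSup hbdd2 ⟨x, hx, rfl⟩⟩⟩
      have hOm : MeasurableSet O := by
        rw [hOdef]; exact measurableSet_Icc.prod measurableSet_Icc
      have hDm : MeasurableSet D := hOm.diff (hKfm t)
      have hOsplit : O = Kf t ∪ D := by rw [hDdef, Set.union_diff_cancel hKO]
      have hindsp : O.indicator (1 : ℝ × ℝ → ℝ) = (Kf t).indicator 1 + D.indicator 1 := by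
        rw [hOsplit]
        exact Set.indicator_union_of_disjoint Set.disjoint_sdiff_right 1
      have hsplit2 : muFlat a₁ b₁ a₂ b₂ k f (O.indicator 1)
          = muFlat a₁ b₁ a₂ b₂ k f ((Kf t).indicator 1)
            + muFlat a₁ b₁ a₂ b₂ k f (D.indicator 1) := by
        rw [hindsp]
        exact muFlat_add' (NICE honeX (hKfm t)) (NICE honeX hDm)
      have hO : 0 ≤ muFlat a₁ b₁ a₂ b₂ k f (O.indicator 1) := by
        rw [hOdef]
        exact ORT s₀ t₁ hs₀p hs₀b ht₁a ht₁b
      -- the leftover piece D has nonpositive measure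
      have hDb1 : D.indicator (1 : ℝ × ℝ → ℝ) (a₁, a₂) = 0 := by
        have hnm : (a₁, a₂) ∉ D := by
          rw [hDdef, hOdef]
          rintro ⟨hO1, -⟩
          exact absurd hO1.1.1 (not_le.mpr (lt_of_lt_of_le hp.1 hs₀p))
        rw [Set.indicator_of_notMem hnm]
      have hDT2 : (∫ σ in a₁..b₁, D.indicator (1 : ℝ × ℝ → ℝ) (σ, a₂) * f (σ, a₂)) = 0 := by
        rw [intervalIntegral.integral_congr_ae (g := fun _ => (0:ℝ)) ?_]
        · simp
        · filter_upwards [ae_ne_point s₀] with σ hσs _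
          by_cases hmem : (σ, a₂) ∈ D
          swap
          · rw [Set.indicator_of_notMem hmem, zero_mul]
          exfalso
          have hmem' := hmem
          rw [hDdef] at hmem'
          obtain ⟨hmO, hmK⟩ := hmem'
          rw [hOdef] at hmO
          have hσs₀ : s₀ < σ := lt_of_le_of_ne hmO.1.1 (Ne.symm hσs)
          obtain ⟨y1, hy1S, hy1lt⟩ := exists_lt_of_csInf_lt hne1 (hs₀def ▸ hσs₀)
          obtain ⟨y, hyK, rfl⟩ := hy1S
          obtain ⟨hyW, hyt⟩ := (hKmem y).mp hyK
          have hσb : σ ≤ b₁ := hmO.1.2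
          have haσ : a₁ ≤ σ := le_of_lt (lt_of_lt_of_le hp.1 (le_trans hs₀p hσs₀.le))
          have hmemX : (σ, a₂) ∈ rect a₁ b₁ a₂ b₂ := ⟨⟨haσ, hσb⟩, ⟨le_rfl, hab₂.le⟩⟩
          have hy1X : (y.1, a₂) ∈ rect a₁ b₁ a₂ b₂ := ⟨hyW.1.1, ⟨le_rfl, hab₂.le⟩⟩
          have hu1' : u (σ, a₂) ≤ u (y.1, a₂) := hu1 y.1 σ a₂ hy1X hmemX hy1lt.le
          have hu2' : u (y.1, a₂) ≤ u (y.1, y.2) :=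
            hu2 y.1 a₂ y.2 hy1X (Prod.mk.eta.symm ▸ hyW.1) hyW.1.2.1
          have hye : u (y.1, y.2) = u y := congrArg u Prod.mk.eta
          have hgσ : t < g (σ, a₂) := by
            have h1 : g y ≤ g (σ, a₂) := by
              simp only [hgdef]
              have := hye ▸ hu2'
              linarith
            linarith
          exact hmK ((hKmem (σ, a₂)).mpr
            ⟨⟨hmemX, lt_of_le_of_lt hs₀p hσs₀⟩, hgσ⟩)
      have hDT3 : 0 ≤ ∫ σ in a₁..b₁, D.indicator (1 : ℝ × ℝ → ℝ) (σ, b₂) * f (σ, b₂) := by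
        apply intervalIntegral.integral_nonneg hab₁.le
        intro σ hσ
        exact mul_nonneg (Set.indicator_nonneg (fun _ _ => zero_le_one) _)
          (hfpos (σ, b₂) ⟨hσ, ⟨hab₂.le, le_rfl⟩⟩).le
      have hDT4 : (∫ σ in a₂..b₂, D.indicator (1 : ℝ × ℝ → ℝ) (b₁, σ) * f (b₁, σ)) = 0 := by
        rw [intervalIntegral.integral_congr_ae (g := fun _ => (0:ℝ)) ?_]
        · simp
        · filter_upwards [ae_ne_point t₁] with σ hσs _
          by_cases hmem : ((b₁ : ℝ), σ) ∈ D
          swap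
          · rw [Set.indicator_of_notMem hmem, zero_mul]
          exfalso
          have hmem' := hmem
          rw [hDdef] at hmem'
          obtain ⟨hmO, hmK⟩ := hmem'
          rw [hOdef] at hmO
          have hσt₁ : σ < t₁ := lt_of_le_of_ne hmO.2.2 hσs
          obtain ⟨y2, hy2S, hy2lt⟩ := exists_lt_of_lt_csSup hne2 (ht₁def ▸ hσt₁)
          obtain ⟨y, hyK, rfl⟩ := hy2S
          obtain ⟨hyW, hyt⟩ := (hKmem y).mp hyK
          have hσX : a₂ ≤ σ := hmO.2.1
          have hσb₂ : σ ≤ b₂ := le_trans hmO.2.2 ht₁b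
          have hmemX : ((b₁ : ℝ), σ) ∈ rect a₁ b₁ a₂ b₂ := ⟨⟨hab₁.le, le_rfl⟩, ⟨hσX, hσb₂⟩⟩
          have hy1X : (y.1, σ) ∈ rect a₁ b₁ a₂ b₂ := ⟨hyW.1.1, ⟨hσX, hσb₂⟩⟩
          have hu1' : u (b₁, σ) ≤ u (y.1, σ) := hu1 y.1 b₁ σ hy1X hmemX hyW.1.1.2
          have hu2' : u (y.1, σ) ≤ u (y.1, y.2) :=
            hu2 y.1 σ y.2 hy1X (Prod.mk.eta.symm ▸ hyW.1) hy2lt.le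
          have hye : u (y.1, y.2) = u y := congrArg u Prod.mk.eta
          have hgσ : t < g (b₁, σ) := by
            have h1 : g y ≤ g (b₁, σ) := by
              simp only [hgdef]
              have := hye ▸ hu2'
              linarith
            linarith
          exact hmK ((hKmem (b₁, σ)).mpr ⟨⟨hmemX, hpb⟩, hgσ⟩)
      have hDT5 : (∫ σ in a₂..b₂, D.indicator (1 : ℝ × ℝ → ℝ) (a₁, σ) * f (a₁, σ)) = 0 := by
        have hfun : ∀ σ : ℝ, D.indicator (1 : ℝ × ℝ → ℝ) (a₁, σ) = 0 := by
          intro σ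
          have hnm : ((a₁ : ℝ), σ) ∉ D := by
            rw [hDdef, hOdef]
            rintro ⟨hO1, -⟩
            exact absurd hO1.1.1 (not_le.mpr (lt_of_lt_of_le hp.1 hs₀p))
          rw [Set.indicator_of_notMem hnm]
        simp only [hfun, zero_mul, intervalIntegral.integral_zero]
      have hDT6 : 0 ≤ ∫ x in rect a₁ b₁ a₂ b₂, D.indicator (1 : ℝ × ℝ → ℝ) x * dens k f x := by
        apply setIntegral_nonneg hXm
        intro x hx
        exact mul_nonneg (Set.indicator_nonneg (fun _ _ => zero_le_one) _) (hMM x hx)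
      have hfacts : 0 ≤ (-(a₂ + k)) * (b₁ - a₁) * (-(b₂ + k)) :=
        mul_nonneg (mul_nonneg (by linarith) (by linarith)) (by linarith)
      have hcT : -((a₂ + k) * (b₁ - a₁) * (b₂ + k)) ≤ 0 := by
        have he : (a₂ + k) * (b₁ - a₁) * (b₂ + k)
            = (-(a₂ + k)) * (b₁ - a₁) * (-(b₂ + k)) := by ring
        rw [he]; linarith [hfacts]
      have hcI : -((a₂ + k) * (b₁ - a₁) * (b₂ + k) * (b₁ - a₁) * b₁ * (b₂ - a₂) * a₁ * (b₂ - a₂)) ≤ 0 := by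
        have h2 : 0 ≤ (-(a₂ + k)) * (b₁ - a₁) * (-(b₂ + k)) * (b₁ - a₁) * b₁ * (b₂ - a₂) * a₁ * (b₂ - a₂) := by
          repeat' apply mul_nonneg
          all_goals linarith
        have he : (a₂ + k) * (b₁ - a₁) * (b₂ + k) * (b₁ - a₁) * b₁ * (b₂ - a₂) * a₁ * (b₂ - a₂)
            = (-(a₂ + k)) * (b₁ - a₁) * (-(b₂ + k)) * (b₁ - a₁) * b₁ * (b₂ - a₂) * a₁ * (b₂ - a₂) := by
          ring
        rw [he]; linarith [h2]
      have hDflat : muFlat a₁ b₁ a₂ b₂ k f (D.indicator 1) ≤ 0 := by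
        unfold muFlat
        rw [hDb1, hDT2, hDT4, hDT5]
        have h3 : -((a₂ + k) * (b₁ - a₁) * (b₂ + k))
            * (∫ σ in a₁..b₁, D.indicator (1 : ℝ × ℝ → ℝ) (σ, b₂) * f (σ, b₂)) ≤ 0 :=
          mul_nonpos_of_nonpos_of_nonneg hcT hDT3
        have h6 : -((a₂ + k) * (b₁ - a₁) * (b₂ + k) * (b₁ - a₁) * b₁ * (b₂ - a₂) * a₁ * (b₂ - a₂))
            * (∫ x in rect a₁ b₁ a₂ b₂, D.indicator (1 : ℝ × ℝ → ℝ) x * dens k f x) ≤ 0 :=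
          mul_nonpos_of_nonpos_of_nonneg hcI hDT6
        linarith
      linarith
  have habs2 : ∀ r x M : ℝ, |x| ≤ M → r * x ≤ |r| * M := by
    intro r x M h
    have h1 : |r * x| ≤ |r| * M := by
      rw [abs_mul]
      exact mul_le_mul_of_nonneg_left h (abs_nonneg r)
    linarith [le_abs_self (r * x)]
  have hMain : 0 ≤ muFlat a₁ b₁ a₂ b₂ k f ((Wgo a₁ b₁ a₂ b₂ p).indicator g) := by
    set m : ℕ := ⌈2 * Cu⌉₊ + 1 with hmdef
    have hm : 2 * Cu ≤ (m : ℝ) := by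
      have h := Nat.le_ceil (2 * Cu)
      have : ((⌈2 * Cu⌉₊ : ℕ) : ℝ) ≤ ((m : ℕ) : ℝ) := by
        exact_mod_cast Nat.le_succ _
      linarith
    set E : ℝ := 1 + |a₂ + k| * (Cf * (b₁ - a₁))
      + |(a₂ + k) * (b₁ - a₁) * (b₂ + k)| * (Cf * (b₁ - a₁))
      + |(a₂ + k) * (b₁ - a₁) * (b₂ + k) * (b₁ - a₁) * b₁| * (Cf * (b₂ - a₂))
      + |(a₂ + k) * (b₁ - a₁) * (b₂ + k) * (b₁ - a₁) * b₁ * (b₂ - a₂) * a₁| * (Cf * (b₂ - a₂))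
      + |(a₂ + k) * (b₁ - a₁) * (b₂ + k) * (b₁ - a₁) * b₁ * (b₂ - a₂) * a₁ * (b₂ - a₂)|
          * (Cd * (volume (rect a₁ b₁ a₂ b₂)).toReal) with hEdef
    have hE0 : 0 ≤ E := by
      have hb1 : (0:ℝ) ≤ Cf * (b₁ - a₁) := mul_nonneg hCf0 (by linarith)
      have hb2 : (0:ℝ) ≤ Cf * (b₂ - a₂) := mul_nonneg hCf0 (by linarith)
      have hb3 : (0:ℝ) ≤ Cd * (volume (rect a₁ b₁ a₂ b₂)).toReal :=
        mul_nonneg hCd0 ENNReal.toReal_nonneg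
      have k1 := mul_nonneg (abs_nonneg (a₂ + k)) hb1
      have k2 := mul_nonneg (abs_nonneg ((a₂ + k) * (b₁ - a₁) * (b₂ + k))) hb1
      have k3 := mul_nonneg (abs_nonneg ((a₂ + k) * (b₁ - a₁) * (b₂ + k) * (b₁ - a₁) * b₁)) hb2
      have k4 := mul_nonneg
        (abs_nonneg ((a₂ + k) * (b₁ - a₁) * (b₂ + k) * (b₁ - a₁) * b₁ * (b₂ - a₂) * a₁)) hb2
      have k5 := mul_nonneg
        (abs_nonneg ((a₂ + k) * (b₁ - a₁) * (b₂ + k) * (b₁ - a₁) * b₁ * (b₂ - a₂) * a₁ * (b₂ - a₂))) hb3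
      rw [hEdef]
      linarith
    have hn_bound : ∀ n : ℕ, 1 ≤ n →
        -(E * (n:ℝ)⁻¹) ≤ muFlat a₁ b₁ a₂ b₂ k f ((Wgo a₁ b₁ a₂ b₂ p).indicator g) := by
      intro n hn
      have hn0 : (0:ℝ) < n := by exact_mod_cast hn
      have hninv : (0:ℝ) < (n:ℝ)⁻¹ := inv_pos.mpr hn0
      set N : ℕ := n * m with hNdef
      set gn : ℝ × ℝ → ℝ :=
        ((n:ℝ)⁻¹) • (∑ i ∈ Finset.range N, (Kf ((i:ℝ)/n)).indicator (1 : ℝ × ℝ → ℝ)) with hgndef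
      have hNice_i : ∀ i ∈ Finset.range N,
          NiceFun a₁ b₁ a₂ b₂ k f ((Kf ((i:ℝ)/n)).indicator 1) :=
        fun i _ => NICE honeX (hKfm _)
      have hNiceSum := nicefun_sum (Finset.range N)
        (fun i => (Kf ((i:ℝ)/n)).indicator 1) hNice_i
      have hNicegn : NiceFun a₁ b₁ a₂ b₂ k f gn := by
        rw [hgndef]
        exact NiceFun.smul' _ hNiceSum
      have hgn_nonneg : 0 ≤ muFlat a₁ b₁ a₂ b₂ k f gn := by
        rw [hgndef, muFlat_smul']
        apply mul_nonneg hninv.le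
        rw [muFlat_sum _ _ hNice_i]
        exact Finset.sum_nonneg fun i _ => key _
      have happrox : ∀ x : ℝ × ℝ,
          |(Wgo a₁ b₁ a₂ b₂ p).indicator g x - gn x| ≤ (n:ℝ)⁻¹ := by
        intro x
        by_cases hx : x ∈ Wgo a₁ b₁ a₂ b₂ p
        · have hgx0 : 0 ≤ g x := hg0 x hx
          have hgxm : g x ≤ (m : ℝ) := le_trans (hgbd x hx.1) hm
          have hiff : ∀ i : ℕ, ((i:ℝ)/n < g x ↔ i < ⌈(n:ℝ) * g x⌉₊) := by
            intro i
            rw [Nat.lt_ceil, div_lt_iff₀ hn0, mul_comm]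
          have hind : ∀ i : ℕ, (Kf ((i:ℝ)/n)).indicator (1 : ℝ × ℝ → ℝ) x
              = if i < ⌈(n:ℝ) * g x⌉₊ then 1 else 0 := by
            intro i
            by_cases hi : i < ⌈(n:ℝ) * g x⌉₊
            · have hxK : x ∈ Kf ((i:ℝ)/n) := by
                rw [hKfdef]
                exact ⟨hx, (hiff i).mpr hi⟩
              simp [Set.indicator_of_mem hxK, hi]
            · have hxK : x ∉ Kf ((i:ℝ)/n) := by
                rw [hKfdef]
                exact fun h => hi ((hiff i).mp h.2)
              simp [Set.indicator_of_notMem hxK, hi]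
          have hq : ⌈(n:ℝ) * g x⌉₊ ≤ N := by
            apply Nat.ceil_le.mpr
            have h1 : (n:ℝ) * g x ≤ (n:ℝ) * (m:ℝ) :=
              mul_le_mul_of_nonneg_left hgxm hn0.le
            have h2 : ((N:ℕ):ℝ) = (n:ℝ) * (m:ℝ) := by
              rw [hNdef]; push_cast; ring
            linarith
          have hsum : ((∑ i ∈ Finset.range N, (Kf ((i:ℝ)/n)).indicator (1 : ℝ × ℝ → ℝ)) x)
              = (⌈(n:ℝ) * g x⌉₊ : ℝ) := by
            rw [Finset.sum_apply]
            simp only [hind]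
            rw [Finset.sum_boole]
            congr 1
            have : (Finset.range N).filter (fun i => i < ⌈(n:ℝ) * g x⌉₊)
                = Finset.range ⌈(n:ℝ) * g x⌉₊ := by
              ext i
              simp only [Finset.mem_filter, Finset.mem_range]
              omega
            rw [this, Finset.card_range]
          have hgnx : gn x = (n:ℝ)⁻¹ * (⌈(n:ℝ) * g x⌉₊ : ℝ) := by
            rw [hgndef]
            simp only [Pi.smul_apply, smul_eq_mul]
            rw [hsum]
          have h1 : (n:ℝ) * g x ≤ (⌈(n:ℝ) * g x⌉₊ : ℝ) := Nat.le_ceil _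
          have h2 : ((⌈(n:ℝ) * g x⌉₊ : ℕ) : ℝ) < (n:ℝ) * g x + 1 :=
            Nat.ceil_lt_add_one (by positivity)
          have e1 : (n:ℝ)⁻¹ * ((n:ℝ) * g x) = g x := by
            field_simp
          have h1' := mul_le_mul_of_nonneg_left h1 (inv_nonneg.mpr hn0.le)
          have h2' := mul_le_mul_of_nonneg_left h2.le (inv_nonneg.mpr hn0.le)
          have e2 : (n:ℝ)⁻¹ * ((n:ℝ) * g x + 1) = g x + (n:ℝ)⁻¹ := by
            rw [mul_add, e1, mul_one]
          rw [Set.indicator_of_mem hx, hgnx]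
          rw [abs_le]
          constructor
          · linarith
          · linarith
        · have hzero : ∀ i ∈ Finset.range N,
              (Kf ((i:ℝ)/n)).indicator (1 : ℝ × ℝ → ℝ) x = 0 :=
            fun i _ => Set.indicator_of_notMem (fun h => hx (hKfW _ h)) 1
          have hgnx : gn x = 0 := by
            rw [hgndef]
            simp only [Pi.smul_apply, smul_eq_mul, Finset.sum_apply]
            rw [Finset.sum_eq_zero hzero, mul_zero]
          rw [Set.indicator_of_notMem hx, hgnx]
          simp [hninv.le]
      set φ : ℝ × ℝ → ℝ := (Wgo a₁ b₁ a₂ b₂ p).indicator g - gn with hφdef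
      have hφeq : (Wgo a₁ b₁ a₂ b₂ p).indicator g = gn + φ := by
        funext x
        simp [hφdef]
      have hNiceφ : NiceFun a₁ b₁ a₂ b₂ k f φ := by
        have : φ = (Wgo a₁ b₁ a₂ b₂ p).indicator g + (-1 : ℝ) • gn := by
          funext x
          simp [hφdef]
          ring
        rw [this]
        exact NiceFun.add' (NICE hgc hWm) (NiceFun.smul' (-1) hNicegn)
      have hφbd : ∀ z : ℝ × ℝ, |φ z| ≤ (n:ℝ)⁻¹ := by
        intro z
        have := happrox z
        rw [hφdef]
        simpa using this
      -- bounds on the integrals of φ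
      have hEDGEh : ∀ y : ℝ, a₂ ≤ y → y ≤ b₂ →
          |∫ σ in a₁..b₁, φ (σ, y) * f (σ, y)| ≤ Cf * (b₁ - a₁) * (n:ℝ)⁻¹ := by
        intro y hy1 hy2
        have hbd : ∀ σ ∈ Set.uIoc a₁ b₁, ‖φ (σ, y) * f (σ, y)‖ ≤ (n:ℝ)⁻¹ * Cf := by
          intro σ hσ
          rw [Set.uIoc_of_le hab₁.le] at hσ
          have hmemX : (σ, y) ∈ rect a₁ b₁ a₂ b₂ := ⟨⟨hσ.1.le, hσ.2⟩, ⟨hy1, hy2⟩⟩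
          rw [Real.norm_eq_abs, abs_mul]
          exact mul_le_mul (hφbd _) (hCf _ hmemX) (abs_nonneg _) hninv.le
        have := intervalIntegral.norm_integral_le_of_norm_le_const hbd
        rw [Real.norm_eq_abs, abs_of_nonneg (by linarith : (0:ℝ) ≤ b₁ - a₁)] at this
        calc |∫ σ in a₁..b₁, φ (σ, y) * f (σ, y)| ≤ (n:ℝ)⁻¹ * Cf * (b₁ - a₁) := this
          _ = Cf * (b₁ - a₁) * (n:ℝ)⁻¹ := by ring
      have hEDGEv : ∀ z : ℝ, a₁ ≤ z → z ≤ b₁ →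
          |∫ σ in a₂..b₂, φ (z, σ) * f (z, σ)| ≤ Cf * (b₂ - a₂) * (n:ℝ)⁻¹ := by
        intro z hz1 hz2
        have hbd : ∀ σ ∈ Set.uIoc a₂ b₂, ‖φ (z, σ) * f (z, σ)‖ ≤ (n:ℝ)⁻¹ * Cf := by
          intro σ hσ
          rw [Set.uIoc_of_le hab₂.le] at hσ
          have hmemX : (z, σ) ∈ rect a₁ b₁ a₂ b₂ := ⟨⟨hz1, hz2⟩, ⟨hσ.1.le, hσ.2⟩⟩
          rw [Real.norm_eq_abs, abs_mul]
          exact mul_le_mul (hφbd _) (hCf _ hmemX) (abs_nonneg _) hninv.le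
        have := intervalIntegral.norm_integral_le_of_norm_le_const hbd
        rw [Real.norm_eq_abs, abs_of_nonneg (by linarith : (0:ℝ) ≤ b₂ - a₂)] at this
        calc |∫ σ in a₂..b₂, φ (z, σ) * f (z, σ)| ≤ (n:ℝ)⁻¹ * Cf * (b₂ - a₂) := this
          _ = Cf * (b₂ - a₂) * (n:ℝ)⁻¹ := by ring
      have hI2 := hEDGEh a₂ le_rfl hab₂.le
      have hI3 := hEDGEh b₂ hab₂.le le_rfl
      have hI4 := hEDGEv b₁ hab₁.le le_rfl
      have hI5 := hEDGEv a₁ le_rfl hab₁.le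
      have hI6 : |∫ x in rect a₁ b₁ a₂ b₂, φ x * dens k f x|
          ≤ Cd * (volume (rect a₁ b₁ a₂ b₂)).toReal * (n:ℝ)⁻¹ := by
        have hfin : volume (rect a₁ b₁ a₂ b₂) < ⊤ := hXc.measure_lt_top
        have hbd : ∀ x ∈ rect a₁ b₁ a₂ b₂, ‖φ x * dens k f x‖ ≤ (n:ℝ)⁻¹ * Cd := by
          intro x hx
          rw [Real.norm_eq_abs, abs_mul]
          exact mul_le_mul (hφbd _) (hCd _ hx) (abs_nonneg _) hninv.le
        have hmeas : AEStronglyMeasurable (fun x => φ x * dens k f x)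
            (volume.restrict (rect a₁ b₁ a₂ b₂)) :=
          hNiceφ.2.2.2.2.aestronglyMeasurable
        have := MeasureTheory.norm_setIntegral_le_of_norm_le_const hfin hbd
        rw [Real.norm_eq_abs] at this
        calc |∫ x in rect a₁ b₁ a₂ b₂, φ x * dens k f x|
            ≤ (n:ℝ)⁻¹ * Cd * (volume (rect a₁ b₁ a₂ b₂)).toReal := this
          _ = Cd * (volume (rect a₁ b₁ a₂ b₂)).toReal * (n:ℝ)⁻¹ := by ring
      have hφE : |muFlat a₁ b₁ a₂ b₂ k f φ| ≤ E * (n:ℝ)⁻¹ := by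
        have hEid : E * (n:ℝ)⁻¹ = (n:ℝ)⁻¹
            + |a₂ + k| * (Cf * (b₁ - a₁) * (n:ℝ)⁻¹)
            + |(a₂ + k) * (b₁ - a₁) * (b₂ + k)| * (Cf * (b₁ - a₁) * (n:ℝ)⁻¹)
            + |(a₂ + k) * (b₁ - a₁) * (b₂ + k) * (b₁ - a₁) * b₁| * (Cf * (b₂ - a₂) * (n:ℝ)⁻¹)
            + |(a₂ + k) * (b₁ - a₁) * (b₂ + k) * (b₁ - a₁) * b₁ * (b₂ - a₂) * a₁|
                * (Cf * (b₂ - a₂) * (n:ℝ)⁻¹)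
            + |(a₂ + k) * (b₁ - a₁) * (b₂ + k) * (b₁ - a₁) * b₁ * (b₂ - a₂) * a₁ * (b₂ - a₂)|
                * (Cd * (volume (rect a₁ b₁ a₂ b₂)).toReal * (n:ℝ)⁻¹) := by
          rw [hEdef]; ring
        have hl2 := habs_term (-(a₂ + k)) _ _ hI2
        have hu2' := habs2 (-(a₂ + k)) _ _ hI2
        have hl3 := habs_term (-((a₂ + k) * (b₁ - a₁) * (b₂ + k))) _ _ hI3
        have hu3 := habs2 (-((a₂ + k) * (b₁ - a₁) * (b₂ + k))) _ _ hI3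
        have hl4 := habs_term (-((a₂ + k) * (b₁ - a₁) * (b₂ + k) * (b₁ - a₁) * b₁)) _ _ hI4
        have hu4 := habs2 (-((a₂ + k) * (b₁ - a₁) * (b₂ + k) * (b₁ - a₁) * b₁)) _ _ hI4
        have hl5 := habs_term
          ((a₂ + k) * (b₁ - a₁) * (b₂ + k) * (b₁ - a₁) * b₁ * (b₂ - a₂) * a₁) _ _ hI5
        have hu5 := habs2
          ((a₂ + k) * (b₁ - a₁) * (b₂ + k) * (b₁ - a₁) * b₁ * (b₂ - a₂) * a₁) _ _ hI5
        have hl6 := habs_term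
          (-((a₂ + k) * (b₁ - a₁) * (b₂ + k) * (b₁ - a₁) * b₁ * (b₂ - a₂) * a₁ * (b₂ - a₂))) _ _ hI6
        have hu6 := habs2
          (-((a₂ + k) * (b₁ - a₁) * (b₂ + k) * (b₁ - a₁) * b₁ * (b₂ - a₂) * a₁ * (b₂ - a₂))) _ _ hI6
        rw [abs_neg] at hl2 hu2' hl3 hu3 hl4 hu4 hl6 hu6
        have ht1 := abs_le.mp (hφbd (a₁, a₂))
        rw [abs_le]
        unfold muFlat
        constructor
        · linarith only [hEid, hl2, hu2', hl3, hu3, hl4, hu4, hl5, hu5, hl6, hu6, ht1.1, ht1.2]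
        · linarith only [hEid, hl2, hu2', hl3, hu3, hl4, hu4, hl5, hu5, hl6, hu6, ht1.1, ht1.2]
      have hsplit3 : muFlat a₁ b₁ a₂ b₂ k f ((Wgo a₁ b₁ a₂ b₂ p).indicator g)
          = muFlat a₁ b₁ a₂ b₂ k f gn + muFlat a₁ b₁ a₂ b₂ k f φ := by
        rw [hφeq, muFlat_add' hNicegn hNiceφ]
      have h2s := abs_le.mp hφE
      linarith only [hgn_nonneg, hsplit3, h2s.1, h2s.2]
    refine le_of_forall_pos_le_add fun ε hε => ?_
    obtain ⟨n, hn⟩ := exists_nat_gt (E / ε)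
    have hn1 : 1 ≤ n := by
      by_contra h
      push_neg at h
      interval_cases n
      simp at hn
      have : 0 ≤ E / ε := div_nonneg hE0 hε.le
      linarith
    have hn0 : (0:ℝ) < n := by exact_mod_cast hn1
    have hEn : E * (n:ℝ)⁻¹ ≤ ε := by
      have h1 : E < (n:ℝ) * ε := by
        rw [div_lt_iff₀ hε] at hn
        linarith
      rw [← div_eq_mul_inv, div_le_iff₀ hn0]
      linarith
    have := hn_bound n hn1
    linarith
  -- conclusion
  have hW0' : muFlat a₁ b₁ a₂ b₂ k f ((Wgo a₁ b₁ a₂ b₂ p).indicator 1) = 0 := by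
    rw [← muInt_eq_flat (NICE honeX hWm)]
    exact hW0
  have hsplit : (Wgo a₁ b₁ a₂ b₂ p).indicator u
      = c • ((Wgo a₁ b₁ a₂ b₂ p).indicator (1 : ℝ × ℝ → ℝ))
        + (-1 : ℝ) • ((Wgo a₁ b₁ a₂ b₂ p).indicator g) := by
    funext x
    by_cases hx : x ∈ Wgo a₁ b₁ a₂ b₂ p
    · simp only [Pi.add_apply, Pi.smul_apply, Set.indicator_of_mem hx, smul_eq_mul,
        Pi.one_apply, hgdef]
      ring
    · simp [Set.indicator_of_notMem hx]
  rw [muInt_eq_flat (NICE huc hWm), hsplit,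
    muFlat_add' ((NICE honeX hWm).smul' c) ((NICE hgc hWm).smul' (-1)),
    muFlat_smul', muFlat_smul', hW0']
  linarith [hMain]
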